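/- Let n_1, …, n_m be positive integers summing to N and let μ be the conjugate (transpose) of the partition obtained by sorting (n_1, …, n_m) in decreasing order. Then there exists a nilpotent N×N matrix X over any field which is strictly block upper triangular with respect to blocks of sizes n_1, …, n_m (in this order) and whose Jordan type is exactly μ. -/

import Mathlib

/-- The nilpotent Jordan block of size `m`: ones on the superdiagonal. -/
def jordanBlock (K : Type*) [Zero K] [One K] (m : ℕ) : Matrix (Fin m) (Fin m) K :=
  Matrix.of fun i j => if (i : ℕ) + 1 = (j : ℕ) then 1 else 0

/-- `J` has Jordan type `lam`. -/
def HasJordanType {K : Type*} [Field K] {ι : Type*} [Fintype ι] [DecidableEq ι]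
    (J : Matrix ι ι K) {m : ℕ} (lam : Fin m → ℕ) : Prop :=
  ∃ (e : ι ≃ (Σ i : Fin m, Fin (lam i))) (P : Matrix ι ι K),
    IsUnit P.det ∧
    J * P = P * ((Matrix.blockDiagonal' (fun i => jordanBlock K (lam i))).submatrix e e)

lemma jordanBlock_pow (K : Type*) [Field K] (n p : ℕ) :
    (jordanBlock K n) ^ p =
      Matrix.of (fun i j : Fin n => if (i : ℕ) + p = (j : ℕ) then (1 : K) else 0) := by
  induction p with
  | zero =>
    ext i j
    simp [Matrix.one_apply, Fin.ext_iff]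
  | succ p ih =>
    ext i j
    rw [pow_succ, ih]
    simp only [Matrix.mul_apply, Matrix.of_apply, jordanBlock]
    rcases Nat.lt_or_ge ((i : ℕ) + p) n with hn | hn
    · rw [Finset.sum_eq_single (⟨(i : ℕ) + p, hn⟩ : Fin n)]
      · simp [Nat.add_assoc]
      · intro k _ hk
        have : ¬ ((i : ℕ) + p = (k : ℕ)) := fun h => hk (Fin.ext h.symm)
        simp [this]
      · simp
    · have h1 : ∀ k : Fin n, ¬((i : ℕ) + p = (k : ℕ)) := by
        intro k h
        have := k.2
        omega
      have h2 : ¬((i : ℕ) + (p + 1) = (j : ℕ)) := by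
        have := j.2
        omega
      simp [h1, h2]

lemma jordanBlock_pow_eq_zero (K : Type*) [Field K] {n p : ℕ} (h : n ≤ p) :
    (jordanBlock K n) ^ p = 0 := by
  rw [jordanBlock_pow]
  ext i j
  have hj := j.2
  have : ¬((i : ℕ) + p = (j : ℕ)) := by omega
  simp [this]

/-- The set of row indices whose block has size `> k` (column `k` of the diagram). -/
def colSet {m : ℕ} (nn : Fin m → ℕ) (k : ℕ) : Finset (Fin m) :=
  Finset.univ.filter fun i : Fin m => k + 1 ≤ nn i

/-- Bijection between the cells of the diagram read by rows and read by columns. -/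
def cellEquiv {m N : ℕ} (nn : Fin m → ℕ) (hsum : ∑ i, nn i = N) :
    (Σ i : Fin m, Fin (nn i)) ≃ (Σ j : Fin N, Fin (colSet nn (j : ℕ)).card) where
  toFun p :=
    ⟨⟨(p.2 : ℕ), lt_of_lt_of_le p.2.2
        (hsum ▸ Finset.single_le_sum (f := nn) (fun _ _ => Nat.zero_le _)
          (Finset.mem_univ p.1))⟩,
      ((colSet nn (p.2 : ℕ)).orderIsoOfFin rfl).symm
        ⟨p.1, Finset.mem_filter.2 ⟨Finset.mem_univ _, p.2.2⟩⟩⟩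
  invFun q :=
    ⟨(((colSet nn (q.1 : ℕ)).orderIsoOfFin rfl q.2 : colSet nn (q.1 : ℕ)) : Fin m),
      ⟨(q.1 : ℕ), (Finset.mem_filter.1 ((colSet nn (q.1 : ℕ)).orderIsoOfFin rfl q.2).2).2⟩⟩
  left_inv p := by
    rcases p with ⟨i, k⟩
    dsimp only
    have h1 : ((((colSet nn (k : ℕ)).orderIsoOfFin rfl)
        (((colSet nn (k : ℕ)).orderIsoOfFin rfl).symm
          ⟨i, Finset.mem_filter.2 ⟨Finset.mem_univ _, k.2⟩⟩) : colSet nn (k : ℕ)) : Fin m)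
        = i := by
      rw [OrderIso.apply_symm_apply]
    refine Sigma.ext h1 ?_
    refine (Fin.heq_ext_iff (by exact congrArg nn h1)).2 ?_
    rfl
  right_inv q := by
    rcases q with ⟨j, a⟩
    dsimp only
    refine Sigma.ext (Fin.ext rfl) ?_
    refine (Fin.heq_ext_iff rfl).2 ?_
    have h1 : (⟨(((colSet nn (j : ℕ)).orderIsoOfFin rfl a : colSet nn (j : ℕ)) : Fin m),
        ((colSet nn (j : ℕ)).orderIsoOfFin rfl a).2⟩
          : {x // x ∈ colSet nn (j : ℕ)}) = (colSet nn (j : ℕ)).orderIsoOfFin rfl a :=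
      Subtype.ext rfl
    show ((((colSet nn (j : ℕ)).orderIsoOfFin rfl).symm _ : Fin _) : ℕ) = (a : ℕ)
    rw [h1, OrderIso.symm_apply_apply]

/-- there is a nilpotent strictly block upper triangular matrix
(blocks of sizes `nn 0, …, nn (m-1)`) whose Jordan type is exactly the conjugate `μ` of
the sorted tuple `nn`, where `μ_j = #{i : nn i ≥ j}` (padded with zero parts). -/
theorem stmt_12 (K : Type*) [Field K] (m N : ℕ) (nn : Fin m → ℕ)
    (hpos : ∀ i, 0 < nn i) (hsum : ∑ i, nn i = N) :
    ∃ X : Matrix (Σ i : Fin m, Fin (nn i)) (Σ i : Fin m, Fin (nn i)) K,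
      (∀ p q : Σ i : Fin m, Fin (nn i), q.1 ≤ p.1 → X p q = 0) ∧ IsNilpotent X ∧
      HasJordanType X
        (fun j : Fin N => (Finset.univ.filter fun i : Fin m => (j : ℕ) + 1 ≤ nn i).card) := by
  classical
  set μ : Fin N → ℕ := fun j : Fin N =>
    (Finset.univ.filter fun i : Fin m => (j : ℕ) + 1 ≤ nn i).card with hμ
  have hμcol : ∀ j : Fin N, μ j = (colSet nn (j : ℕ)).card := fun j => rfl
  let e : (Σ i : Fin m, Fin (nn i)) ≃ (Σ j : Fin N, Fin (μ j)) := cellEquiv nn hsum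
  set J : Matrix (Σ j : Fin N, Fin (μ j)) (Σ j : Fin N, Fin (μ j)) K :=
    Matrix.blockDiagonal' (fun j => jordanBlock K (μ j)) with hJ
  refine ⟨J.submatrix e e, ?_, ?_, e, 1, by simp, by simp [hJ]⟩
  · -- strictly block upper triangular
    intro p q hle
    by_contra hne
    have key : ∀ (r s : Σ j : Fin N, Fin (μ j)), J r s ≠ 0 →
        (e.symm r).1 < (e.symm s).1 := by
      rintro ⟨j, a⟩ ⟨j', b⟩ hrs
      by_cases hj : j = j'
      · subst hj
        rw [hJ, Matrix.blockDiagonal'_apply_eq] at hrs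
        have hab : (a : ℕ) + 1 = (b : ℕ) := by
          by_contra hc
          exact hrs (by simp [jordanBlock, hc])
        have hab' : a < b := by rw [Fin.lt_def]; omega
        show (((colSet nn (j : ℕ)).orderIsoOfFin rfl a : colSet nn (j : ℕ)) : Fin m)
            < (((colSet nn (j : ℕ)).orderIsoOfFin rfl b : colSet nn (j : ℕ)) : Fin m)
        exact Subtype.coe_lt_coe.2 (((colSet nn (j : ℕ)).orderIsoOfFin rfl).strictMono hab')
      · exact absurd (Matrix.blockDiagonal'_apply_ne _ _ _ hj) hrs
    have hlt := key (e p) (e q) (by simpa using hne)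
    simp only [Equiv.symm_apply_apply] at hlt
    exact absurd hle (not_le.2 hlt)
  · -- nilpotent
    refine ⟨N + 1, ?_⟩
    have hpow : ∀ t : ℕ, (J.submatrix e e) ^ t = (J ^ t).submatrix e e := by
      intro t
      induction t with
      | zero => simp [Matrix.submatrix_one_equiv]
      | succ t iht =>
        rw [pow_succ, pow_succ, iht, Matrix.submatrix_mul_equiv]
    rw [hpow, hJ, ← Matrix.blockDiagonal'_pow]
    have hmN : m ≤ N := by
      have h1 : ∑ _i : Fin m, 1 ≤ ∑ i, nn i := Finset.sum_le_sum (fun i _ => hpos i)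
      simpa [hsum] using h1
    have hz : ∀ j : Fin N, (jordanBlock K (μ j)) ^ (N + 1) = 0 := by
      intro j
      refine jordanBlock_pow_eq_zero K ?_
      have h1 : μ j ≤ m := by
        exact (Finset.card_filter_le Finset.univ (fun i : Fin m => (j : ℕ) + 1 ≤ nn i)).trans_eq (by simp)
      omega
    have hfun : ((fun j : Fin N => jordanBlock K (μ j)) ^ (N + 1))
        = fun j : Fin N => (0 : Matrix (Fin (μ j)) (Fin (μ j)) K) := by
      funext j
      rw [Pi.pow_apply]
      exact hz j
    rw [hfun]
    ext p q
    simp [Matrix.submatrix_apply, Matrix.blockDiagonal'_apply]
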